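/- Let G be a bipartite graph with parts A and B such that G has m >= 10 edges. Then ISO(G) >= m^2 / (5 |A| |B|), i.e., G contains two edge-disjoint isomorphic subgraphs each with at least m^2/(5|A||B|) edges. -/

import Mathlib

open Finset

lemma perm_fiber_card_mul {α : Type*} [Fintype α] [DecidableEq α] (x y : α) :
    (Finset.univ.filter fun σ : Equiv.Perm α => σ x = y).card * Fintype.card α
      = (Fintype.card α).factorial := by
  have hconst : ∀ y₁ y₂ : α,
      (Finset.univ.filter fun σ : Equiv.Perm α => σ x = y₁).card
        = (Finset.univ.filter fun σ : Equiv.Perm α => σ x = y₂).card := by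
    intro y₁ y₂
    apply Finset.card_bij (fun σ _ => Equiv.swap y₁ y₂ * σ)
    · intro σ hσ
      simp only [Finset.mem_filter, Finset.mem_univ, true_and] at hσ ⊢
      rw [Equiv.Perm.mul_apply, hσ, Equiv.swap_apply_left]
    · intro σ₁ _ σ₂ _ h
      exact mul_left_cancel h
    · intro σ' h'
      simp only [Finset.mem_filter, Finset.mem_univ, true_and] at h'
      refine ⟨Equiv.swap y₁ y₂ * σ', ?_, ?_⟩
      · simp only [Finset.mem_filter, Finset.mem_univ, true_and]
        rw [Equiv.Perm.mul_apply, h', Equiv.swap_apply_right]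
      · rw [← mul_assoc, Equiv.swap_mul_self, one_mul]
  have hsum : Fintype.card (Equiv.Perm α)
      = ∑ z : α, (Finset.univ.filter fun σ : Equiv.Perm α => σ x = z).card := by
    rw [← Finset.card_univ]
    exact Finset.card_eq_sum_card_fiberwise (fun σ _ => Finset.mem_univ (σ x))
  rw [← Fintype.card_perm, hsum, Finset.sum_congr rfl (fun z _ => hconst z y)]
  simp [Finset.sum_const, Finset.card_univ, mul_comm]

lemma extract_third {β : Type*} [DecidableEq β] (g : β → β) :
    ∀ D : Finset β, Set.InjOn g ↑D → (∀ x ∈ D, g x ≠ x) →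
      ∃ X ⊆ D, D.card ≤ 3 * X.card ∧ ∀ x ∈ X, ∀ y ∈ X, g x ≠ y := by
  intro D
  induction D using Finset.strongInduction with
  | _ D ih =>
    intro hinj hnf
    rcases D.eq_empty_or_nonempty with rfl | ⟨e, he⟩
    · exact ⟨∅, Finset.Subset.refl _, by simp, by simp⟩
    · set D' := D.filter (fun x => x ≠ e ∧ x ≠ g e ∧ g x ≠ e) with hD'
      have hD'sub : D' ⊆ D := Finset.filter_subset _ _
      have heD' : e ∉ D' := by simp [hD']
      have hssub : D' ⊂ D := Finset.ssubset_iff_of_subset hD'sub |>.mpr ⟨e, he, heD'⟩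
      obtain ⟨X', hX'sub, hX'card, hX'good⟩ :=
        ih D' hssub (hinj.mono (by exact_mod_cast hD'sub)) (fun x hx => hnf x (hD'sub hx))
      refine ⟨insert e X', ?_, ?_, ?_⟩
      · exact Finset.insert_subset he (hX'sub.trans hD'sub)
      · -- card bound : D.card ≤ D'.card + 3
        have hrem : D \ D' ⊆ insert e (insert (g e) (D.filter (fun x => g x = e))) := by
          intro x hx
          simp only [hD', Finset.mem_sdiff, Finset.mem_filter, not_and, not_not] at hx
          obtain ⟨hxD, hx2⟩ := hx
          by_cases h1 : x = e
          · simp [h1]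
          · by_cases h2 : x = g e
            · simp [h2]
            · have := hx2 hxD h1 h2
              simp [Finset.mem_insert, Finset.mem_filter, hxD, this]
        have hfcard : (D.filter (fun x => g x = e)).card ≤ 1 := by
          refine Finset.card_le_one.mpr ?_
          intro x hx y hy
          simp only [Finset.mem_filter] at hx hy
          exact hinj hx.1 hy.1 (hx.2.trans hy.2.symm)
        have h3 : (D \ D').card ≤ 3 := by
          have c1 := Finset.card_le_card hrem
          have c2 := Finset.card_insert_le e (insert (g e) (D.filter (fun x => g x = e)))
          have c3 := Finset.card_insert_le (g e) (D.filter (fun x => g x = e))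
          omega
        have h4 : (D \ D').card + D'.card = D.card :=
          Finset.card_sdiff_add_card_eq_card hD'sub
        have h5 : (insert e X').card = X'.card + 1 :=
          Finset.card_insert_of_notMem (fun h => heD' (hX'sub h))
        omega
      · intro x hx y hy
        rcases Finset.mem_insert.mp hx with hxe | hx' <;>
          rcases Finset.mem_insert.mp hy with hye | hy'
        · rw [hxe, hye]; exact hnf e he
        · rw [hxe]; intro h
          have hyD : y ∈ D' := hX'sub hy'
          simp only [hD', Finset.mem_filter] at hyD
          exact hyD.2.2.1 h.symm
        · rw [hye]
          have hxD : x ∈ D' := hX'sub hx'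
          simp only [hD', Finset.mem_filter] at hxD
          exact hxD.2.2.2
        · exact hX'good x hx' y hy'

open Finset

set_option maxHeartbeats 1000000 in
theorem stmt_7 {V : Type*} [Fintype V] (G : SimpleGraph V) (A B : Finset V)
    (hAB : Disjoint A B)
    (hbip : ∀ u v, G.Adj u v → (u ∈ A ∧ v ∈ B) ∨ (u ∈ B ∧ v ∈ A))
    (hm : 10 ≤ G.edgeSet.ncard) :
    ∃ H₁ H₂ : SimpleGraph V, H₁ ≤ G ∧ H₂ ≤ G ∧
      Disjoint H₁.edgeSet H₂.edgeSet ∧ Nonempty (H₁ ≃g H₂) ∧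
      (G.edgeSet.ncard : ℝ) ^ 2 / (5 * A.card * B.card) ≤ H₁.edgeSet.ncard ∧
      (G.edgeSet.ncard : ℝ) ^ 2 / (5 * A.card * B.card) ≤ H₂.edgeSet.ncard := by
  classical
  set m := G.edgeSet.ncard with hm_def
  set E' : Finset (V × V) := (A ×ˢ B).filter fun p => G.Adj p.1 p.2 with hE'
  -- pairs in E' are adjacent and in A × B
  have hE'mem : ∀ p ∈ E', p.1 ∈ A ∧ p.2 ∈ B ∧ G.Adj p.1 p.2 := by
    intro p hp
    rw [hE', Finset.mem_filter, Finset.mem_product] at hp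
    exact ⟨hp.1.1, hp.1.2, hp.2⟩
  have hnotB : ∀ x ∈ A, x ∉ B := fun x hx => Finset.disjoint_left.mp hAB hx
  -- sym2 map is injective on A × B pairs
  have hsym : ∀ p ∈ A ×ˢ B, ∀ q ∈ A ×ˢ B,
      (s(p.1, p.2) : Sym2 V) = s(q.1, q.2) → p = q := by
    intro p hp q hq h
    rw [Finset.mem_product] at hp hq
    rcases Sym2.eq_iff.mp h with ⟨h1, h2⟩ | ⟨h1, h2⟩
    · exact Prod.ext h1 h2
    · exact absurd hq.2 (hnotB q.2 (h1 ▸ hp.1))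
  -- the count of E' equals m
  have hcardE' : E'.card = m := by
    have hfin : G.edgeSet.Finite := Set.toFinite _
    rw [hm_def, Set.ncard_eq_toFinset_card _ hfin]
    apply Finset.card_bij (fun p _ => s(p.1, p.2))
    · intro p hp
      rw [Set.Finite.mem_toFinset]
      exact (G.mem_edgeSet).mpr (hE'mem _ hp).2.2
    · intro p hp q hq h
      exact hsym p (Finset.filter_subset _ _ hp) q (Finset.filter_subset _ _ hq) h
    · intro e he
      rw [Set.Finite.mem_toFinset] at he
      induction e with
      | _ u v =>
        have hadj : G.Adj u v := (G.mem_edgeSet).mp he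
        rcases hbip u v hadj with ⟨huA, hvB⟩ | ⟨huB, hvA⟩
        · refine ⟨(u, v), ?_, rfl⟩
          rw [hE', Finset.mem_filter, Finset.mem_product]
          exact ⟨⟨huA, hvB⟩, hadj⟩
        · refine ⟨(v, u), ?_, ?_⟩
          · rw [hE', Finset.mem_filter, Finset.mem_product]
            exact ⟨⟨hvA, huB⟩, hadj.symm⟩
          · exact Sym2.eq_swap
  have hm10 : 10 ≤ E'.card := hcardE' ▸ hm
  -- A and B are nonempty
  obtain ⟨p₀, hp₀⟩ : E'.Nonempty := Finset.card_pos.mp (by omega)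
  have hA0 : 0 < A.card := Finset.card_pos.mpr ⟨p₀.1, (hE'mem _ hp₀).1⟩
  have hB0 : 0 < B.card := Finset.card_pos.mpr ⟨p₀.2, (hE'mem _ hp₀).2.1⟩
  -- extended permutation
  set π : Equiv.Perm ↥A × Equiv.Perm ↥B → Equiv.Perm V := fun st =>
    (st.1.extendDomain (Equiv.refl {x : V // x ∈ A})).trans
      (st.2.extendDomain (Equiv.refl {x : V // x ∈ B})) with hπ
  have hπA : ∀ st (x : V) (hx : x ∈ A), π st x = ↑(st.1 ⟨x, hx⟩) := by
    intro st x hx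
    rw [hπ]
    simp only [Equiv.trans_apply]
    rw [Equiv.Perm.extendDomain_apply_subtype _ _ hx]
    simp only [Equiv.refl_symm, Equiv.refl_apply]
    exact Equiv.Perm.extendDomain_apply_not_subtype _ _ (hnotB _ (st.1 ⟨x, hx⟩).2)
  have hnotA : ∀ x ∈ B, x ∉ A := fun x hx => Finset.disjoint_right.mp hAB hx
  have hπB : ∀ st (x : V) (hx : x ∈ B), π st x = ↑(st.2 ⟨x, hx⟩) := by
    intro st x hx
    rw [hπ]
    simp only [Equiv.trans_apply]
    rw [Equiv.Perm.extendDomain_apply_not_subtype _ _ (hnotA _ hx)]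
    rw [Equiv.Perm.extendDomain_apply_subtype _ _ hx]
    simp only [Equiv.refl_symm, Equiv.refl_apply]
  set g : (Equiv.Perm ↥A × Equiv.Perm ↥B) → V × V → V × V :=
    fun st p => (π st p.1, π st p.2) with hg
  have hginj : ∀ st, Function.Injective (g st) := by
    intro st p q h
    rw [hg, Prod.ext_iff] at h
    exact Prod.ext ((π st).injective h.1) ((π st).injective h.2)
  -- counting lemma
  have hCount : ∀ p ∈ A ×ˢ B, ∀ q ∈ A ×ˢ B,
      (Finset.univ.filter fun st : Equiv.Perm ↥A × Equiv.Perm ↥B => g st p = q).card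
        * (A.card * B.card) = A.card.factorial * B.card.factorial := by
    intro p hp q hq
    obtain ⟨hp1, hp2⟩ := Finset.mem_product.mp hp
    obtain ⟨hq1, hq2⟩ := Finset.mem_product.mp hq
    have hfilter : (Finset.univ.filter fun st : Equiv.Perm ↥A × Equiv.Perm ↥B => g st p = q)
        = (Finset.univ.filter fun σ : Equiv.Perm ↥A => σ ⟨p.1, hp1⟩ = ⟨q.1, hq1⟩) ×ˢ
          (Finset.univ.filter fun τ : Equiv.Perm ↥B => τ ⟨p.2, hp2⟩ = ⟨q.2, hq2⟩) := by
      ext st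
      simp only [Finset.mem_filter, Finset.mem_univ, true_and, Finset.mem_product]
      constructor
      · intro h
        have h1 : π st p.1 = q.1 := congrArg Prod.fst h
        have h2 : π st p.2 = q.2 := congrArg Prod.snd h
        rw [hπA st p.1 hp1] at h1
        rw [hπB st p.2 hp2] at h2
        exact ⟨Subtype.ext h1, Subtype.ext h2⟩
      · rintro ⟨h1, h2⟩
        apply Prod.ext
        · show π st p.1 = q.1
          rw [hπA st p.1 hp1, h1]
        · show π st p.2 = q.2
          rw [hπB st p.2 hp2, h2]
    rw [hfilter, Finset.card_product]
    have e1 := perm_fiber_card_mul (⟨p.1, hp1⟩ : ↥A) ⟨q.1, hq1⟩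
    have e2 := perm_fiber_card_mul (⟨p.2, hp2⟩ : ↥B) ⟨q.2, hq2⟩
    rw [Fintype.card_coe] at e1 e2
    rw [mul_mul_mul_comm, e1, e2]
  -- double counting
  set N : (Equiv.Perm ↥A × Equiv.Perm ↥B) → ℕ := fun st =>
    (E'.filter fun p => g st p ∈ E' ∧ g st p ≠ p).card with hN
  have hsum : (∑ st : Equiv.Perm ↥A × Equiv.Perm ↥B, N st) * (A.card * B.card)
      = E'.card * (E'.card - 1) * (A.card.factorial * B.card.factorial) := by
    have step2 : (∑ st : Equiv.Perm ↥A × Equiv.Perm ↥B, N st)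
        = ∑ p ∈ E', (Finset.univ.filter
            fun st : Equiv.Perm ↥A × Equiv.Perm ↥B => g st p ∈ E' ∧ g st p ≠ p).card := by
      have step1 : ∀ st : Equiv.Perm ↥A × Equiv.Perm ↥B,
          N st = ∑ p ∈ E', if g st p ∈ E' ∧ g st p ≠ p then 1 else 0 := by
        intro st; rw [hN]; exact Finset.card_filter _ _
      rw [Finset.sum_congr rfl (fun st _ => step1 st), Finset.sum_comm]
      exact Finset.sum_congr rfl fun p _ => (Finset.card_filter _ _).symm
    have step3 : ∀ p ∈ E', (Finset.univ.filter
          fun st : Equiv.Perm ↥A × Equiv.Perm ↥B => g st p ∈ E' ∧ g st p ≠ p).card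
        = ∑ q ∈ E'.erase p, (Finset.univ.filter
            fun st : Equiv.Perm ↥A × Equiv.Perm ↥B => g st p = q).card := by
      intro p hp
      rw [Finset.card_eq_sum_card_fiberwise
        (f := fun st => g st p) (t := E'.erase p)
        (fun st hst => by
          rw [Finset.mem_coe, Finset.mem_filter] at hst
          exact Finset.mem_coe.mpr <| Finset.mem_erase.mpr ⟨hst.2.2, hst.2.1⟩)]
      apply Finset.sum_congr rfl
      intro q hq
      obtain ⟨hqne, hqE⟩ := Finset.mem_erase.mp hq
      rw [Finset.filter_filter]
      congr 1
      ext st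
      simp only [Finset.mem_filter, Finset.mem_univ, true_and]
      constructor
      · exact fun h => h.2
      · intro h
        exact ⟨⟨by rw [h]; exact hqE, by rw [h]; exact hqne⟩, h⟩
    rw [step2, Finset.sum_congr rfl step3, Finset.sum_mul]
    have hinner : ∀ p ∈ E',
        (∑ q ∈ E'.erase p, (Finset.univ.filter
            fun st : Equiv.Perm ↥A × Equiv.Perm ↥B => g st p = q).card) * (A.card * B.card)
          = (E'.card - 1) * (A.card.factorial * B.card.factorial) := by
      intro p hp
      rw [Finset.sum_mul,
        Finset.sum_congr rfl (fun q hq =>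
          hCount p (Finset.filter_subset _ _ hp) q
            (Finset.filter_subset _ _ (Finset.mem_of_mem_erase hq))),
        Finset.sum_const, Finset.card_erase_of_mem hp, smul_eq_mul]
    rw [Finset.sum_congr rfl hinner, Finset.sum_const, smul_eq_mul, ← mul_assoc]
  -- pigeonhole
  obtain ⟨st, hst⟩ : ∃ st, E'.card * (E'.card - 1) ≤ A.card * B.card * N st := by
    by_contra hcon
    push_neg at hcon
    have h1 : (∑ st : Equiv.Perm ↥A × Equiv.Perm ↥B, N st) * (A.card * B.card)
        ≤ (A.card.factorial * B.card.factorial) * (E'.card * (E'.card - 1) - 1) := by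
      calc (∑ st : Equiv.Perm ↥A × Equiv.Perm ↥B, N st) * (A.card * B.card)
          = ∑ st : Equiv.Perm ↥A × Equiv.Perm ↥B, (N st * (A.card * B.card)) := by
            rw [Finset.sum_mul]
        _ ≤ ∑ _st : Equiv.Perm ↥A × Equiv.Perm ↥B, (E'.card * (E'.card - 1) - 1) :=
            Finset.sum_le_sum (fun st _ => by
              have := hcon st
              rw [mul_comm (N st)]
              omega)
        _ = (Fintype.card (Equiv.Perm ↥A × Equiv.Perm ↥B)) * (E'.card * (E'.card - 1) - 1) := by
            rw [Finset.sum_const, Finset.card_univ, smul_eq_mul]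
        _ = (A.card.factorial * B.card.factorial) * (E'.card * (E'.card - 1) - 1) := by
            rw [Fintype.card_prod, Fintype.card_perm, Fintype.card_perm,
              Fintype.card_coe, Fintype.card_coe]
    rw [hsum] at h1
    have hF : 0 < A.card.factorial * B.card.factorial :=
      Nat.mul_pos (Nat.factorial_pos _) (Nat.factorial_pos _)
    have hmm : 2 ≤ E'.card * (E'.card - 1) := by
      have h90 : 10 * 9 ≤ E'.card * (E'.card - 1) :=
        Nat.mul_le_mul hm10 (by omega)
      omega
    have hlt : (A.card.factorial * B.card.factorial) * (E'.card * (E'.card - 1) - 1)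
        < (A.card.factorial * B.card.factorial) * (E'.card * (E'.card - 1)) :=
      (Nat.mul_lt_mul_left hF).mpr (by omega)
    have hcontr : E'.card * (E'.card - 1) * (A.card.factorial * B.card.factorial)
        < E'.card * (E'.card - 1) * (A.card.factorial * B.card.factorial) := by
      calc E'.card * (E'.card - 1) * (A.card.factorial * B.card.factorial)
          ≤ (A.card.factorial * B.card.factorial) * (E'.card * (E'.card - 1) - 1) := h1
        _ < (A.card.factorial * B.card.factorial) * (E'.card * (E'.card - 1)) := hlt
        _ = E'.card * (E'.card - 1) * (A.card.factorial * B.card.factorial) := mul_comm _ _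
    exact absurd hcontr (lt_irrefl _)
  -- extraction
  obtain ⟨X, hXsub, hXcard, hXgood⟩ :=
    extract_third (g st) (E'.filter fun p => g st p ∈ E' ∧ g st p ≠ p)
      (fun p _ q _ h => hginj st h)
      (fun x hx => (Finset.mem_filter.mp hx).2.2)
  have hXD : ∀ p ∈ X, p ∈ E' ∧ g st p ∈ E' ∧ g st p ≠ p :=
    fun p hp => by
      have := hXsub hp
      rw [Finset.mem_filter] at this
      exact ⟨this.1, this.2.1, this.2.2⟩
  have hXAB : ∀ p ∈ X, p ∈ A ×ˢ B := fun p hp =>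
    Finset.mem_product.mpr ⟨(hE'mem _ (hXD p hp).1).1, (hE'mem _ (hXD p hp).1).2.1⟩
  have hYAB : ∀ p ∈ X.image (g st), p ∈ A ×ˢ B := by
    intro q hq
    obtain ⟨p, hp, rfl⟩ := Finset.mem_image.mp hq
    exact Finset.mem_product.mpr
      ⟨(hE'mem _ (hXD p hp).2.1).1, (hE'mem _ (hXD p hp).2.1).2.1⟩
  -- edge finsets
  set S₁ : Finset (Sym2 V) := X.image fun p => s(p.1, p.2) with hS₁
  set S₂ : Finset (Sym2 V) := (X.image (g st)).image fun p => s(p.1, p.2) with hS₂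
  set H₁ := SimpleGraph.fromEdgeSet (↑S₁ : Set (Sym2 V)) with hH₁
  set H₂ := SimpleGraph.fromEdgeSet (↑S₂ : Set (Sym2 V)) with hH₂
  have hcard1 : S₁.card = X.card := by
    apply Finset.card_image_of_injOn
    intro p hp q hq h
    exact hsym p (hXAB p hp) q (hXAB q hq) h
  have hcard2 : S₂.card = X.card := by
    rw [hS₂, Finset.card_image_of_injOn, Finset.card_image_of_injective _ (hginj st)]
    intro p hp q hq h
    exact hsym p (hYAB p hp) q (hYAB q hq) h
  have hS₁sub : (↑S₁ : Set (Sym2 V)) ⊆ G.edgeSet := by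
    intro e he
    obtain ⟨p, hp, rfl⟩ := Finset.mem_image.mp he
    exact (G.mem_edgeSet).mpr (hE'mem _ (hXD p hp).1).2.2
  have hS₂sub : (↑S₂ : Set (Sym2 V)) ⊆ G.edgeSet := by
    intro e he
    obtain ⟨p, hp, rfl⟩ := Finset.mem_image.mp he
    obtain ⟨x, hx, rfl⟩ := Finset.mem_image.mp hp
    exact (G.mem_edgeSet).mpr (hE'mem _ (hXD x hx).2.1).2.2
  have hnodiag : ∀ (S : Finset (Sym2 V)), (∀ p ∈ S, ¬ p.IsDiag) →
      (SimpleGraph.fromEdgeSet (↑S : Set (Sym2 V))).edgeSet = ↑S := by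
    intro S hS
    rw [SimpleGraph.edgeSet_fromEdgeSet]
    ext e
    simp only [Set.mem_diff, Set.mem_setOf_eq, Finset.mem_coe]
    exact ⟨fun h => h.1, fun h => ⟨h, hS e h⟩⟩
  have hdiag1 : ∀ e ∈ S₁, ¬ Sym2.IsDiag e := by
    intro e he
    obtain ⟨p, hp, rfl⟩ := Finset.mem_image.mp he
    rw [Sym2.mk_isDiag_iff]
    intro h
    have hmem := Finset.mem_product.mp (hXAB p hp)
    exact hnotB _ hmem.1 (h ▸ hmem.2)
  have hdiag2 : ∀ e ∈ S₂, ¬ Sym2.IsDiag e := by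
    intro e he
    obtain ⟨p, hp, rfl⟩ := Finset.mem_image.mp he
    rw [Sym2.mk_isDiag_iff]
    intro h
    have hmem := Finset.mem_product.mp (hYAB p hp)
    exact hnotB _ hmem.1 (h ▸ hmem.2)
  have hedge1 : H₁.edgeSet = ↑S₁ := hnodiag S₁ hdiag1
  have hedge2 : H₂.edgeSet = ↑S₂ := hnodiag S₂ hdiag2
  -- disjointness
  have hdisj : Disjoint H₁.edgeSet H₂.edgeSet := by
    rw [hedge1, hedge2]
    rw [Set.disjoint_left]
    intro e he1 he2
    obtain ⟨p, hp, rfl⟩ := Finset.mem_image.mp he1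
    obtain ⟨q, hq, he⟩ := Finset.mem_image.mp he2
    obtain ⟨x, hx, rfl⟩ := Finset.mem_image.mp hq
    have : g st x = p := hsym _ (hYAB _ (Finset.mem_image_of_mem _ hx)) _ (hXAB p hp) he
    exact hXgood x hx p hp this
  -- iso
  have hiso : Nonempty (H₁ ≃g H₂) := by
    refine ⟨⟨π st, ?_⟩⟩
    intro u v
    rw [hH₁, hH₂]
    simp only [SimpleGraph.fromEdgeSet_adj, Finset.mem_coe]
    constructor
    · rintro ⟨hmem, hne⟩
      have hne' : u ≠ v := fun h => hne (by rw [h])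
      refine ⟨?_, hne'⟩
      obtain ⟨q, hq, he⟩ := Finset.mem_image.mp hmem
      obtain ⟨x, hx, rfl⟩ := Finset.mem_image.mp hq
      have he' : (s(π st x.1, π st x.2) : Sym2 V) = s(π st u, π st v) := he
      rcases Sym2.eq_iff.mp he' with ⟨h1, h2⟩ | ⟨h1, h2⟩
      · have hu := (π st).injective h1
        have hv := (π st).injective h2
        exact Finset.mem_image.mpr ⟨x, hx, by rw [hu, hv]⟩
      · have hu := (π st).injective h1
        have hv := (π st).injective h2
        exact Finset.mem_image.mpr ⟨x, hx, by rw [hu, hv]; exact Sym2.eq_swap⟩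
    · rintro ⟨hmem, hne⟩
      refine ⟨?_, (π st).injective.ne_iff.mpr hne⟩
      obtain ⟨x, hx, he⟩ := Finset.mem_image.mp hmem
      refine Finset.mem_image.mpr ⟨g st x, Finset.mem_image_of_mem _ hx, ?_⟩
      rcases Sym2.eq_iff.mp he with ⟨h1, h2⟩ | ⟨h1, h2⟩
      · show (s(π st x.1, π st x.2) : Sym2 V) = s(π st u, π st v)
        rw [h1, h2]
      · show (s(π st x.1, π st x.2) : Sym2 V) = s(π st u, π st v)
        rw [h1, h2]
        exact Sym2.eq_swap
  -- numeric
  have hnum : (m : ℝ) ^ 2 / (5 * A.card * B.card) ≤ X.card := by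
    have hD : E'.card * (E'.card - 1) ≤ A.card * B.card * (3 * X.card) :=
      le_trans hst (Nat.mul_le_mul_left _ hXcard)
    rw [hcardE'] at hD hm10
    have hu : 10 * m ≤ m * m := Nat.mul_le_mul_right m hm10
    have hsq : m * m ≤ 3 * (A.card * B.card * X.card) + m := by
      have h2 : m * (m - 1) + m = m * m := by
        rw [← Nat.mul_succ, Nat.sub_one, Nat.succ_pred_eq_of_pos (by omega)]
      have e : A.card * B.card * (3 * X.card) = 3 * (A.card * B.card * X.card) := by ring
      rw [e] at hD
      omega
    have hkey : 3 * (m * m) ≤ 15 * (A.card * B.card * X.card) := by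
      generalize A.card * B.card * X.card = v at hsq ⊢
      generalize m * m = u at hu hsq ⊢
      omega
    have hkey' : 3 * ((m : ℝ) * m) ≤ 15 * ((A.card : ℝ) * B.card * X.card) := by
      have := (Nat.cast_le (α := ℝ)).mpr hkey
      push_cast at this
      exact this
    have hA0' : (0 : ℝ) < A.card := by exact_mod_cast hA0
    have hB0' : (0 : ℝ) < B.card := by exact_mod_cast hB0
    have hab : (0 : ℝ) < 5 * (A.card : ℝ) * (B.card : ℝ) :=
      mul_pos (mul_pos (by norm_num) hA0') hB0'
    rw [div_le_iff₀ hab, sq]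
    linarith [hkey']
  refine ⟨H₁, H₂, ?_, ?_, hdisj, hiso, ?_, ?_⟩
  · exact le_trans (SimpleGraph.fromEdgeSet_mono hS₁sub)
      (le_of_eq (SimpleGraph.fromEdgeSet_edgeSet G))
  · exact le_trans (SimpleGraph.fromEdgeSet_mono hS₂sub)
      (le_of_eq (SimpleGraph.fromEdgeSet_edgeSet G))
  · rw [hedge1, Set.ncard_coe_finset, hcard1]; exact hnum
  · rw [hedge2, Set.ncard_coe_finset, hcard2]; exact hnum
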